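/- arXiv:0707.2221 — 4 statements merged into one kernel-verified Lean document; each statement's English description precedes it below -/
import Mathlib

section
/- Let ψ : ℝ² → ℝ be C³ and satisfy Δψ = -γ(ψ) for a C¹ function γ, and let R = ½|∇ψ|² + g·y - ½Q + Γ̂(ψ) with Γ̂(s) = ∫₀ˢ γ(t) dt. Then ΔR = 2ψ_{xy}² - 2ψ_{xx}ψ_{yy} everywhere on the domain. -/
open Set

noncomputable def px (f : ℝ × ℝ → ℝ) (p : ℝ × ℝ) : ℝ := deriv (fun t => f (t, p.2)) p.1

noncomputable def py (f : ℝ × ℝ → ℝ) (p : ℝ × ℝ) : ℝ := deriv (fun t => f (p.1, t)) p.2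

noncomputable def Rfun (ψ : ℝ × ℝ → ℝ) (γ : ℝ → ℝ) (g Q : ℝ) : ℝ × ℝ → ℝ :=
  fun p => ((px ψ p) ^ 2 + (py ψ p) ^ 2) / 2 + g * p.2 - Q / 2 + ∫ t in (0:ℝ)..(ψ p), γ t

lemma hasDerivAt_px_fderiv {f : ℝ × ℝ → ℝ} {p : ℝ × ℝ} (hf : DifferentiableAt ℝ f p) :
    HasDerivAt (fun t => f (t, p.2)) (fderiv ℝ f p ((1:ℝ), (0:ℝ))) p.1 := by
  have hline : HasDerivAt (fun t : ℝ => (t, p.2)) ((1:ℝ), (0:ℝ)) p.1 :=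
    (hasDerivAt_id p.1).prodMk (hasDerivAt_const _ _)
  exact hf.hasFDerivAt.comp_hasDerivAt p.1 hline

lemma hasDerivAt_py_fderiv {f : ℝ × ℝ → ℝ} {p : ℝ × ℝ} (hf : DifferentiableAt ℝ f p) :
    HasDerivAt (fun t => f (p.1, t)) (fderiv ℝ f p ((0:ℝ), (1:ℝ))) p.2 := by
  have hline : HasDerivAt (fun t : ℝ => (p.1, t)) ((0:ℝ), (1:ℝ)) p.2 :=
    (hasDerivAt_const _ _).prodMk (hasDerivAt_id p.2)
  exact hf.hasFDerivAt.comp_hasDerivAt p.2 hline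

lemma px_eq_fderiv {f : ℝ × ℝ → ℝ} {p : ℝ × ℝ} (hf : DifferentiableAt ℝ f p) :
    px f p = fderiv ℝ f p ((1:ℝ), (0:ℝ)) := (hasDerivAt_px_fderiv hf).deriv

lemma py_eq_fderiv {f : ℝ × ℝ → ℝ} {p : ℝ × ℝ} (hf : DifferentiableAt ℝ f p) :
    py f p = fderiv ℝ f p ((0:ℝ), (1:ℝ)) := (hasDerivAt_py_fderiv hf).deriv

lemma hasDerivAt_px {f : ℝ × ℝ → ℝ} {p : ℝ × ℝ} (hf : DifferentiableAt ℝ f p) :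
    HasDerivAt (fun t => f (t, p.2)) (px f p) p.1 := by
  rw [px_eq_fderiv hf]; exact hasDerivAt_px_fderiv hf

lemma hasDerivAt_py {f : ℝ × ℝ → ℝ} {p : ℝ × ℝ} (hf : DifferentiableAt ℝ f p) :
    HasDerivAt (fun t => f (p.1, t)) (py f p) p.2 := by
  rw [py_eq_fderiv hf]; exact hasDerivAt_py_fderiv hf

lemma contDiff_px {f : ℝ × ℝ → ℝ} {n : ℕ∞} (hf : ContDiff ℝ (n + 1) f) :
    ContDiff ℝ n (px f) := by
  have hd : Differentiable ℝ f := hf.differentiable (by simp)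
  have h1 : px f = fun q => fderiv ℝ f q ((1:ℝ), (0:ℝ)) :=
    funext fun q => px_eq_fderiv (hd q)
  rw [h1]
  exact (ContinuousLinearMap.apply ℝ ℝ ((1:ℝ), (0:ℝ))).contDiff.comp (hf.fderiv_right le_rfl)

lemma contDiff_py {f : ℝ × ℝ → ℝ} {n : ℕ∞} (hf : ContDiff ℝ (n + 1) f) :
    ContDiff ℝ n (py f) := by
  have hd : Differentiable ℝ f := hf.differentiable (by simp)
  have h1 : py f = fun q => fderiv ℝ f q ((0:ℝ), (1:ℝ)) :=
    funext fun q => py_eq_fderiv (hd q)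
  rw [h1]
  exact (ContinuousLinearMap.apply ℝ ℝ ((0:ℝ), (1:ℝ))).contDiff.comp (hf.fderiv_right le_rfl)

lemma clairaut {f : ℝ × ℝ → ℝ} (hf : ContDiff ℝ 2 f) (p : ℝ × ℝ) :
    px (py f) p = py (px f) p := by
  have hd : Differentiable ℝ f := hf.differentiable two_ne_zero
  have hf' : ContDiff ℝ 1 (fderiv ℝ f) := hf.fderiv_right le_rfl
  have hpy : py f = fun q => fderiv ℝ f q ((0:ℝ), (1:ℝ)) := funext fun q => py_eq_fderiv (hd q)
  have hpx : px f = fun q => fderiv ℝ f q ((1:ℝ), (0:ℝ)) := funext fun q => px_eq_fderiv (hd q)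
  have key : ∀ v : ℝ × ℝ, HasFDerivAt (fun q => fderiv ℝ f q v)
      ((ContinuousLinearMap.apply ℝ ℝ v).comp (fderiv ℝ (fderiv ℝ f) p)) p := fun v =>
    (ContinuousLinearMap.apply ℝ ℝ v).hasFDerivAt.comp p
      (hf'.differentiable one_ne_zero p).hasFDerivAt
  have h1 : px (py f) p = fderiv ℝ (fderiv ℝ f) p ((1:ℝ),(0:ℝ)) ((0:ℝ),(1:ℝ)) := by
    rw [hpy, px_eq_fderiv ((key _).differentiableAt), (key _).fderiv]
    rfl
  have h2 : py (px f) p = fderiv ℝ (fderiv ℝ f) p ((0:ℝ),(1:ℝ)) ((1:ℝ),(0:ℝ)) := by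
    rw [hpx, py_eq_fderiv ((key _).differentiableAt), (key _).fderiv]
    rfl
  rw [h1, h2]
  exact (hf.contDiffAt.isSymmSndFDerivAt (by norm_num)) _ _
lemma hasDerivAt_primitive {γ : ℝ → ℝ} (hγ : Continuous γ) (s : ℝ) :
    HasDerivAt (fun u => ∫ t in (0:ℝ)..u, γ t) (γ s) s :=
  intervalIntegral.integral_hasDerivAt_right (hγ.intervalIntegrable _ _)
    (hγ.stronglyMeasurableAtFilter _ _) hγ.continuousAt

lemma pxR_eq {ψ : ℝ × ℝ → ℝ} {γ : ℝ → ℝ} (g Q : ℝ) (hψ : ContDiff ℝ 3 ψ)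
    (hγ : ContDiff ℝ 1 γ) (q : ℝ × ℝ) :
    px (Rfun ψ γ g Q) q =
      px ψ q * px (px ψ) q + py ψ q * px (py ψ) q + γ (ψ q) * px ψ q := by
  have hψ' : ContDiff ℝ ((2:ℕ∞) + 1) ψ := by exact_mod_cast hψ
  have hpx : ContDiff ℝ 2 (px ψ) := contDiff_px hψ'
  have hpy : ContDiff ℝ 2 (py ψ) := contDiff_py hψ'
  have hd : Differentiable ℝ ψ := hψ.differentiable (by norm_num)
  have h1 : HasDerivAt (fun t => px ψ (t, q.2)) (px (px ψ) q) q.1 :=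
    hasDerivAt_px ((hpx.differentiable two_ne_zero) q)
  have h2 : HasDerivAt (fun t => py ψ (t, q.2)) (px (py ψ) q) q.1 :=
    hasDerivAt_px ((hpy.differentiable two_ne_zero) q)
  have h3 : HasDerivAt (fun t => ψ (t, q.2)) (px ψ q) q.1 := hasDerivAt_px (hd q)
  have h4 : HasDerivAt (fun t => ∫ s in (0:ℝ)..(ψ (t, q.2)), γ s) (γ (ψ q) * px ψ q) q.1 :=
    by have := (hasDerivAt_primitive hγ.continuous (ψ q)).comp q.1 h3; exact this
  have H : HasDerivAt (fun t => Rfun ψ γ g Q (t, q.2))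
      ((2 * px ψ q ^ 1 * px (px ψ) q + 2 * py ψ q ^ 1 * px (py ψ) q) / 2 + γ (ψ q) * px ψ q)
      q.1 :=
    (((((h1.pow 2).add (h2.pow 2)).div_const 2).add_const (g * q.2)).sub_const (Q / 2)).add h4
  show deriv (fun t => Rfun ψ γ g Q (t, q.2)) q.1 = _
  rw [H.deriv]; ring

lemma pyR_eq {ψ : ℝ × ℝ → ℝ} {γ : ℝ → ℝ} (g Q : ℝ) (hψ : ContDiff ℝ 3 ψ)
    (hγ : ContDiff ℝ 1 γ) (q : ℝ × ℝ) :
    py (Rfun ψ γ g Q) q =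
      px ψ q * py (px ψ) q + py ψ q * py (py ψ) q + g + γ (ψ q) * py ψ q := by
  have hψ' : ContDiff ℝ ((2:ℕ∞) + 1) ψ := by exact_mod_cast hψ
  have hpx : ContDiff ℝ 2 (px ψ) := contDiff_px hψ'
  have hpy : ContDiff ℝ 2 (py ψ) := contDiff_py hψ'
  have hd : Differentiable ℝ ψ := hψ.differentiable (by norm_num)
  have h1 : HasDerivAt (fun t => px ψ (q.1, t)) (py (px ψ) q) q.2 :=
    hasDerivAt_py ((hpx.differentiable two_ne_zero) q)
  have h2 : HasDerivAt (fun t => py ψ (q.1, t)) (py (py ψ) q) q.2 :=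
    hasDerivAt_py ((hpy.differentiable two_ne_zero) q)
  have h3 : HasDerivAt (fun t => ψ (q.1, t)) (py ψ q) q.2 := hasDerivAt_py (hd q)
  have h4 : HasDerivAt (fun t => ∫ s in (0:ℝ)..(ψ (q.1, t)), γ s) (γ (ψ q) * py ψ q) q.2 :=
    by have := (hasDerivAt_primitive hγ.continuous (ψ q)).comp q.2 h3; exact this
  have hg : HasDerivAt (fun t : ℝ => g * t) g q.2 := by
    simpa using (hasDerivAt_id q.2).const_mul g
  have H : HasDerivAt (fun t => Rfun ψ γ g Q (q.1, t))
      ((2 * px ψ q ^ 1 * py (px ψ) q + 2 * py ψ q ^ 1 * py (py ψ) q) / 2 + g + γ (ψ q) * py ψ q)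
      q.2 :=
    ((((((h1.pow 2).add (h2.pow 2)).div_const 2).add hg)).sub_const (Q / 2)).add h4
  show deriv (fun t => Rfun ψ γ g Q (q.1, t)) q.2 = _
  rw [H.deriv]; ring

theorem stmt1 (ψ : ℝ × ℝ → ℝ) (γ : ℝ → ℝ) (g Q : ℝ) (U : Set (ℝ × ℝ)) (hU : IsOpen U)
    (hψ : ContDiff ℝ 3 ψ) (hγ : ContDiff ℝ 1 γ)
    (hpde : ∀ p ∈ U, px (px ψ) p + py (py ψ) p = -γ (ψ p)) :
    ∀ p ∈ U,
      px (px (Rfun ψ γ g Q)) p + py (py (Rfun ψ γ g Q)) p =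
        2 * (py (px ψ) p) ^ 2 - 2 * px (px ψ) p * py (py ψ) p := by
  intro p hp
  have hψ' : ContDiff ℝ ((2:ℕ∞) + 1) ψ := by exact_mod_cast hψ
  have hψ2 : ContDiff ℝ 2 ψ := hψ.of_le (by norm_num)
  have hpx : ContDiff ℝ 2 (px ψ) := contDiff_px hψ'
  have hpy : ContDiff ℝ 2 (py ψ) := contDiff_py hψ'
  have hpx1 : ContDiff ℝ ((1:ℕ∞) + 1) (px ψ) := by exact_mod_cast hpx
  have hpy1 : ContDiff ℝ ((1:ℕ∞) + 1) (py ψ) := by exact_mod_cast hpy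
  have hpxx : ContDiff ℝ 1 (px (px ψ)) := contDiff_px hpx1
  have hpxy : ContDiff ℝ 1 (px (py ψ)) := contDiff_px hpy1
  have hpyx : ContDiff ℝ 1 (py (px ψ)) := contDiff_py hpx1
  have hpyy : ContDiff ℝ 1 (py (py ψ)) := contDiff_py hpy1
  have hd : Differentiable ℝ ψ := hψ.differentiable (by norm_num)
  have hγd : Differentiable ℝ γ := hγ.differentiable one_ne_zero
  -- basic HasDerivAt facts along the x-line through p
  have x3 : HasDerivAt (fun t => ψ (t, p.2)) (px ψ p) p.1 := hasDerivAt_px (hd p)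
  have xa1 : HasDerivAt (fun t => px ψ (t, p.2)) (px (px ψ) p) p.1 :=
    hasDerivAt_px (hpx.differentiable two_ne_zero p)
  have xa2 : HasDerivAt (fun t => px (px ψ) (t, p.2)) (px (px (px ψ)) p) p.1 :=
    hasDerivAt_px (hpxx.differentiable one_ne_zero p)
  have xa3 : HasDerivAt (fun t => py ψ (t, p.2)) (px (py ψ) p) p.1 :=
    hasDerivAt_px (hpy.differentiable two_ne_zero p)
  have xa4 : HasDerivAt (fun t => px (py ψ) (t, p.2)) (px (px (py ψ)) p) p.1 :=
    hasDerivAt_px (hpxy.differentiable one_ne_zero p)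
  have xa5 : HasDerivAt (fun t => py (py ψ) (t, p.2)) (px (py (py ψ)) p) p.1 :=
    hasDerivAt_px (hpyy.differentiable one_ne_zero p)
  have xg : HasDerivAt (fun t => γ (ψ (t, p.2))) (deriv γ (ψ p) * px ψ p) p.1 :=
    ((hγd (ψ p)).hasDerivAt).comp p.1 x3
  -- basic HasDerivAt facts along the y-line through p
  have y3 : HasDerivAt (fun t => ψ (p.1, t)) (py ψ p) p.2 := hasDerivAt_py (hd p)
  have ya1 : HasDerivAt (fun t => py ψ (p.1, t)) (py (py ψ) p) p.2 :=
    hasDerivAt_py (hpy.differentiable two_ne_zero p)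
  have ya2 : HasDerivAt (fun t => py (py ψ) (p.1, t)) (py (py (py ψ)) p) p.2 :=
    hasDerivAt_py (hpyy.differentiable one_ne_zero p)
  have ya3 : HasDerivAt (fun t => px ψ (p.1, t)) (py (px ψ) p) p.2 :=
    hasDerivAt_py (hpx.differentiable two_ne_zero p)
  have ya4 : HasDerivAt (fun t => py (px ψ) (p.1, t)) (py (py (px ψ)) p) p.2 :=
    hasDerivAt_py (hpyx.differentiable one_ne_zero p)
  have ya5 : HasDerivAt (fun t => px (px ψ) (p.1, t)) (py (px (px ψ)) p) p.2 :=
    hasDerivAt_py (hpxx.differentiable one_ne_zero p)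
  have yg : HasDerivAt (fun t => γ (ψ (p.1, t))) (deriv γ (ψ p) * py ψ p) p.2 :=
    ((hγd (ψ p)).hasDerivAt).comp p.2 y3
  -- second derivative of R in x
  have hRx : px (px (Rfun ψ γ g Q)) p =
      (px (px ψ) p * px (px ψ) p + px ψ p * px (px (px ψ)) p) +
      (px (py ψ) p * px (py ψ) p + py ψ p * px (px (py ψ)) p) +
      (deriv γ (ψ p) * px ψ p * px ψ p + γ (ψ p) * px (px ψ) p) := by
    have he : (fun t => px (Rfun ψ γ g Q) (t, p.2)) =
        fun t => px ψ (t, p.2) * px (px ψ) (t, p.2) + py ψ (t, p.2) * px (py ψ) (t, p.2) +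
          γ (ψ (t, p.2)) * px ψ (t, p.2) :=
      funext fun t => pxR_eq g Q hψ hγ (t, p.2)
    have H : HasDerivAt (fun t => px ψ (t, p.2) * px (px ψ) (t, p.2) +
        py ψ (t, p.2) * px (py ψ) (t, p.2) + γ (ψ (t, p.2)) * px ψ (t, p.2)) _ p.1 :=
      ((xa1.mul xa2).add (xa3.mul xa4)).add (xg.mul xa1)
    show deriv (fun t => px (Rfun ψ γ g Q) (t, p.2)) p.1 = _
    rw [he, H.deriv]
  -- second derivative of R in y
  have hRy : py (py (Rfun ψ γ g Q)) p =
      (py (px ψ) p * py (px ψ) p + px ψ p * py (py (px ψ)) p) +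
      (py (py ψ) p * py (py ψ) p + py ψ p * py (py (py ψ)) p) +
      (deriv γ (ψ p) * py ψ p * py ψ p + γ (ψ p) * py (py ψ) p) := by
    have he : (fun t => py (Rfun ψ γ g Q) (p.1, t)) =
        fun t => px ψ (p.1, t) * py (px ψ) (p.1, t) + py ψ (p.1, t) * py (py ψ) (p.1, t) + g +
          γ (ψ (p.1, t)) * py ψ (p.1, t) :=
      funext fun t => pyR_eq g Q hψ hγ (p.1, t)
    have H : HasDerivAt (fun t => px ψ (p.1, t) * py (px ψ) (p.1, t) +
        py ψ (p.1, t) * py (py ψ) (p.1, t) + g + γ (ψ (p.1, t)) * py ψ (p.1, t)) _ p.2 :=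
      (((ya3.mul ya4).add (ya1.mul ya2)).add_const g).add (yg.mul ya1)
    show deriv (fun t => py (Rfun ψ γ g Q) (p.1, t)) p.2 = _
    rw [he, H.deriv]
  -- Clairaut facts
  have cl : px (py ψ) = py (px ψ) := funext (clairaut hψ2)
  have cl2 : px (px (py ψ)) p = py (px (px ψ)) p := by
    rw [cl]; exact clairaut hpx p
  have cl3 : py (py (px ψ)) p = px (py (py ψ)) p := by
    rw [← cl]; exact (clairaut hpy p).symm
  -- differentiated PDE
  have hUx : ∀ᶠ t in nhds p.1, (t, p.2) ∈ U := by
    have : IsOpen {t : ℝ | (t, p.2) ∈ U} := hU.preimage (continuous_id.prodMk continuous_const)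
    exact this.mem_nhds hp
  have hUy : ∀ᶠ t in nhds p.2, (p.1, t) ∈ U := by
    have : IsOpen {t : ℝ | (p.1, t) ∈ U} := hU.preimage (continuous_const.prodMk continuous_id)
    exact this.mem_nhds hp
  have hx3 : px (px (px ψ)) p + px (py (py ψ)) p = -(deriv γ (ψ p) * px ψ p) := by
    have hev : (fun t => px (px ψ) (t, p.2) + py (py ψ) (t, p.2)) =ᶠ[nhds p.1]
        (fun t => -γ (ψ (t, p.2))) := by
      filter_upwards [hUx] with t ht
      exact hpde _ ht
    calc px (px (px ψ)) p + px (py (py ψ)) p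
        = deriv (fun t => px (px ψ) (t, p.2) + py (py ψ) (t, p.2)) p.1 := (xa2.add xa5).deriv.symm
      _ = deriv (fun t => -γ (ψ (t, p.2))) p.1 := hev.deriv_eq
      _ = -(deriv γ (ψ p) * px ψ p) := xg.neg.deriv
  have hy3 : py (px (px ψ)) p + py (py (py ψ)) p = -(deriv γ (ψ p) * py ψ p) := by
    have hev : (fun t => px (px ψ) (p.1, t) + py (py ψ) (p.1, t)) =ᶠ[nhds p.2]
        (fun t => -γ (ψ (p.1, t))) := by
      filter_upwards [hUy] with t ht
      exact hpde _ ht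
    calc py (px (px ψ)) p + py (py (py ψ)) p
        = deriv (fun t => px (px ψ) (p.1, t) + py (py ψ) (p.1, t)) p.2 := (ya5.add ya2).deriv.symm
      _ = deriv (fun t => -γ (ψ (p.1, t))) p.2 := hev.deriv_eq
      _ = -(deriv γ (ψ p) * py ψ p) := yg.neg.deriv
  have hp0 : px (px ψ) p + py (py ψ) p = -γ (ψ p) := hpde p hp
  have clp : px (py ψ) p = py (px ψ) p := congrFun cl p
  rw [hRx, hRy, cl2, cl3, clp]
  linear_combination px ψ p * hx3 + py ψ p * hy3 +
    (px (px ψ) p + py (py ψ) p) * hp0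
end

section
/- Let a, b, p, q, r be real numbers with b < 0 (think b = ψ_y(A), a = ψ_x(A), p = ψ_{xx}(A), q = ψ_{xy}(A), r = ψ_{yy}(A)). Suppose b·q = a·r, a·q < b·p, and q² ≤ p·r. Then p + r < 0. -/
theorem stmt2 (a b p q r : ℝ) (hb : b < 0)
    (h1 : b * q = a * r) (h2 : a * q < b * p) (h3 : q ^ 2 ≤ p * r) :
    p + r < 0 := by
  have key : a ^ 2 * r > b ^ 2 * p := by
    have h4 := mul_lt_mul_of_neg_left h2 hb
    have h5 : b * (a * q) = a ^ 2 * r := by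
      calc b * (a * q) = a * (b * q) := by ring
        _ = a * (a * r) := by rw [h1]
        _ = a ^ 2 * r := by ring
    nlinarith [sq_nonneg b]
  rcases lt_trichotomy r 0 with hr | hr | hr
  · have hp : p ≤ 0 := by nlinarith [sq_nonneg q]
    linarith
  · have hq : q = 0 := by
      have : q ^ 2 ≤ 0 := by rw [hr] at h3; linarith
      nlinarith [sq_nonneg q]
    have : (0:ℝ) < b * p := by rw [hq] at h2; linarith
    have hp : p < 0 := by nlinarith
    linarith
  · exfalso
    have h6 : (b * q) ^ 2 = (a * r) ^ 2 := by rw [h1]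
    nlinarith [mul_le_mul_of_nonneg_left h3 (sq_nonneg b), h6, mul_pos hr hr]
end

section
/- Under the surface identity d/dx[½ψ_y(x,η(x))²] = R_x(x,η(x)), if additionally R(x,y) ≤ 0 for all (x,y) with y ≤ η(x), R(x,η(x)) = 0 for all x, and ψ_y(x,η(x)) < 0 for all x, then the function x ↦ ψ_y(x, η(x)) is monotone increasing on any interval where η is increasing, and monotone decreasing on any interval where η is decreasing. -/
open Set

open Filter Topology in
theorem stmt5 (ψ : ℝ × ℝ → ℝ) (γ : ℝ → ℝ) (g Q : ℝ) (η : ℝ → ℝ)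
    (hη : ContDiff ℝ 1 η) (hψ : ContDiff ℝ 2 ψ) (hγ : ContDiff ℝ 1 γ)
    (hηpos : ∀ x : ℝ, 0 < η x)
    (hident : ∀ x : ℝ,
      deriv (fun t => (py ψ (t, η t)) ^ 2 / 2) x = px (Rfun ψ γ g Q) (x, η x))
    (hRle : ∀ p : ℝ × ℝ, 0 ≤ p.2 → p.2 ≤ η p.1 → Rfun ψ γ g Q p ≤ 0)
    (hRsurf : ∀ x : ℝ, Rfun ψ γ g Q (x, η x) = 0)
    (hψy : ∀ x : ℝ, py ψ (x, η x) < 0) :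
    (∀ a b : ℝ, MonotoneOn η (Set.Icc a b) →
        MonotoneOn (fun x => py ψ (x, η x)) (Set.Icc a b)) ∧
    (∀ a b : ℝ, AntitoneOn η (Set.Icc a b) →
        AntitoneOn (fun x => py ψ (x, η x)) (Set.Icc a b)) := by
  -- `py ψ p` equals the Fréchet derivative of ψ applied to (0,1)
  have hψdiff : Differentiable ℝ ψ := hψ.differentiable (by norm_num)
  have hpy_eq : ∀ p : ℝ × ℝ, py ψ p = fderiv ℝ ψ p (0, 1) := by
    intro p
    have hc : HasDerivAt (fun t : ℝ => ((p.1, t) : ℝ × ℝ)) ((0 : ℝ), (1 : ℝ)) p.2 :=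
      (hasDerivAt_const _ _).prodMk (hasDerivAt_id _)
    have hd : HasDerivAt (fun t => ψ (p.1, t)) (fderiv ℝ ψ p (0, 1)) p.2 :=
      (hψdiff p).hasFDerivAt.comp_hasDerivAt p.2 hc
    exact hd.deriv
  -- the surface trace of ψ_y is C¹
  have hfd : ContDiff ℝ 1 (fun p : ℝ × ℝ => fderiv ℝ ψ p (0, 1)) :=
    (hψ.fderiv_right (by norm_num)).clm_apply contDiff_const
  have hhC : ContDiff ℝ 1 (fun x : ℝ => py ψ (x, η x)) := by
    have : ContDiff ℝ 1 (fun x : ℝ => fderiv ℝ ψ (x, η x) (0, 1)) :=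
      hfd.comp (contDiff_id.prodMk hη)
    convert this using 2 with x
    exact hpy_eq (x, η x)
  have hsqC : ContDiff ℝ 1 (fun x : ℝ => (py ψ (x, η x)) ^ 2 / 2) :=
    (hhC.pow 2).div_const 2
  have hsqDiff : Differentiable ℝ (fun x : ℝ => (py ψ (x, η x)) ^ 2 / 2) :=
    hsqC.differentiable one_ne_zero
  constructor
  · -- monotone case
    intro a b hmono
    have hkey : ∀ x ∈ Set.Ioo a b, deriv (fun t => (py ψ (t, η t)) ^ 2 / 2) x ≤ 0 := by
      intro x hx
      rw [hident x]
      show deriv (fun t => Rfun ψ γ g Q (t, η x)) x ≤ 0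
      set φ : ℝ → ℝ := fun t => Rfun ψ γ g Q (t, η x) with hφ
      by_cases hdiff : DifferentiableAt ℝ φ x
      · have htend : Tendsto (slope φ x) (𝓝[>] x) (𝓝 (deriv φ x)) :=
          (hasDerivAt_iff_tendsto_slope.mp hdiff.hasDerivAt).mono_left
            (nhdsWithin_mono _ fun t ht => ne_of_gt ht)
        refine le_of_tendsto htend ?_
        filter_upwards [Ioo_mem_nhdsGT_of_mem (⟨le_refl x, hx.2⟩ : x ∈ Set.Ico x b)]
          with t ht
        have hxI : x ∈ Set.Icc a b := ⟨hx.1.le, hx.2.le⟩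
        have htI : t ∈ Set.Icc a b := ⟨le_trans hx.1.le ht.1.le, ht.2.le⟩
        have hηle : η x ≤ η t := hmono hxI htI ht.1.le
        have hφt : φ t ≤ 0 := hRle (t, η x) (hηpos x).le hηle
        have hφx : φ x = 0 := hRsurf x
        rw [slope_def_field, hφx, sub_zero]
        exact div_nonpos_of_nonpos_of_nonneg hφt (sub_nonneg.mpr ht.1.le)
      · rw [deriv_zero_of_not_differentiableAt hdiff]
    have hsq : AntitoneOn (fun x : ℝ => (py ψ (x, η x)) ^ 2 / 2) (Set.Icc a b) :=
      antitoneOn_of_deriv_nonpos (convex_Icc a b) hsqC.continuous.continuousOn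
        (hsqDiff.differentiableOn) (fun x hx => hkey x (by rwa [interior_Icc] at hx))
    intro x hx y hy hxy
    have h1 := hsq hx hy hxy
    have h2 := hψy x
    have h3 := hψy y
    simp only at h1 ⊢
    nlinarith [h1, h2, h3]
  · -- antitone case
    intro a b hanti
    have hkey : ∀ x ∈ Set.Ioo a b, 0 ≤ deriv (fun t => (py ψ (t, η t)) ^ 2 / 2) x := by
      intro x hx
      rw [hident x]
      show (0 : ℝ) ≤ deriv (fun t => Rfun ψ γ g Q (t, η x)) x
      set φ : ℝ → ℝ := fun t => Rfun ψ γ g Q (t, η x) with hφ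
      by_cases hdiff : DifferentiableAt ℝ φ x
      · have htend : Tendsto (slope φ x) (𝓝[<] x) (𝓝 (deriv φ x)) :=
          (hasDerivAt_iff_tendsto_slope.mp hdiff.hasDerivAt).mono_left
            (nhdsWithin_mono _ fun t ht => ne_of_lt ht)
        refine ge_of_tendsto htend ?_
        filter_upwards [Ioo_mem_nhdsLT_of_mem (⟨hx.1, le_refl x⟩ : x ∈ Set.Ioc a x)]
          with t ht
        have hxI : x ∈ Set.Icc a b := ⟨hx.1.le, hx.2.le⟩
        have htI : t ∈ Set.Icc a b := ⟨ht.1.le, le_trans ht.2.le hx.2.le⟩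
        have hηle : η x ≤ η t := hanti htI hxI ht.2.le
        have hφt : φ t ≤ 0 := hRle (t, η x) (hηpos x).le hηle
        have hφx : φ x = 0 := hRsurf x
        rw [slope_def_field, hφx, sub_zero]
        have hden : t - x ≤ 0 := sub_nonpos.mpr ht.2.le
        exact div_nonneg_iff.mpr (Or.inr ⟨hφt, hden⟩)
      · rw [deriv_zero_of_not_differentiableAt hdiff]
    have hsq : MonotoneOn (fun x : ℝ => (py ψ (x, η x)) ^ 2 / 2) (Set.Icc a b) :=
      monotoneOn_of_deriv_nonneg (convex_Icc a b) hsqC.continuous.continuousOn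
        (hsqDiff.differentiableOn) (fun x hx => hkey x (by rwa [interior_Icc] at hx))
    intro x hx y hy hxy
    have h1 := hsq hx hy hxy
    have h2 := hψy x
    have h3 := hψy y
    simp only at h1 ⊢
    nlinarith [h1, h2, h3]
end

section
/- Let η be C¹ and strictly increasing on [c,d], ψ and R as in the water wave problem with R ≤ 0 in Ω̄, R = 0 on the surface, ψ_y < 0 on the surface, and the surface identity d/dx[½ψ_y(x,η(x))²] = R_x(x,η(x)) holding. Then min over the surface points {(x,η(x)) : x ∈ [c,d]} of |ψ_y| is attained at x = d (the highest point), i.e. |ψ_y(x,η(x))| is decreasing in x on [c,d]. -/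
open Set

theorem stmt17 (ψ : ℝ × ℝ → ℝ) (γ : ℝ → ℝ) (g Q : ℝ) (η : ℝ → ℝ) (c d : ℝ)
    (hcd : c < d)
    (hη : ContDiff ℝ 1 η) (hψ : ContDiff ℝ 2 ψ) (hγ : ContDiff ℝ 1 γ)
    (hηpos : ∀ x : ℝ, 0 < η x)
    (hmono : StrictMonoOn η (Set.Icc c d))
    (hident : ∀ x : ℝ,
      deriv (fun t => (py ψ (t, η t)) ^ 2 / 2) x = px (Rfun ψ γ g Q) (x, η x))
    (hRle : ∀ p : ℝ × ℝ, 0 ≤ p.2 → p.2 ≤ η p.1 → Rfun ψ γ g Q p ≤ 0)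
    (hRsurf : ∀ x : ℝ, Rfun ψ γ g Q (x, η x) = 0)
    (hψy : ∀ x : ℝ, py ψ (x, η x) < 0) :
    AntitoneOn (fun x => |py ψ (x, η x)|) (Set.Icc c d) := by
  have hψd : Differentiable ℝ ψ := hψ.differentiable (by norm_num)
  -- partial derivatives via fderiv
  have hpyf : ∀ p : ℝ × ℝ, py ψ p = fderiv ℝ ψ p (0, 1) := by
    intro p
    have h1 : HasDerivAt (fun t => ψ (p.1, t)) (fderiv ℝ ψ p (0, 1)) p.2 := by
      have h2 : HasDerivAt (fun t : ℝ => ((p.1 : ℝ), t)) ((0 : ℝ), (1 : ℝ)) p.2 :=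
        HasDerivAt.prodMk (hasDerivAt_const p.2 p.1) (hasDerivAt_id p.2)
      have h3 := (hψd (p.1, p.2)).hasFDerivAt.comp_hasDerivAt p.2 h2
      simpa [Function.comp_def] using h3
    simpa [py] using h1.deriv
  have hpxf : ∀ p : ℝ × ℝ, px ψ p = fderiv ℝ ψ p (1, 0) := by
    intro p
    have h1 : HasDerivAt (fun t => ψ (t, p.2)) (fderiv ℝ ψ p (1, 0)) p.1 := by
      have h2 : HasDerivAt (fun t : ℝ => ((t : ℝ), (p.2 : ℝ))) ((1 : ℝ), (0 : ℝ)) p.1 :=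
        HasDerivAt.prodMk (hasDerivAt_id p.1) (hasDerivAt_const p.1 p.2)
      have h3 := (hψd (p.1, p.2)).hasFDerivAt.comp_hasDerivAt p.1 h2
      simpa [Function.comp_def] using h3
    simpa [px] using h1.deriv
  have hfd : ContDiff ℝ 1 (fun p : ℝ × ℝ => fderiv ℝ ψ p) :=
    hψ.fderiv_right (le_refl _)
  have hPy : ContDiff ℝ 1 (fun p : ℝ × ℝ => fderiv ℝ ψ p (0, 1)) :=
    hfd.clm_apply contDiff_const
  have hPx : ContDiff ℝ 1 (fun p : ℝ × ℝ => fderiv ℝ ψ p (1, 0)) :=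
    hfd.clm_apply contDiff_const
  -- the integral function
  set Φ : ℝ → ℝ := fun x => ∫ t in (0:ℝ)..x, γ t with hΦdef
  have hΦ : ∀ x, HasDerivAt Φ (γ x) x := fun x =>
    (hγ.continuous.integral_hasStrictDerivAt 0 x).hasDerivAt
  have hΦdiff : Differentiable ℝ Φ := fun x => (hΦ x).differentiableAt
  -- R is differentiable
  have hReq : Rfun ψ γ g Q = fun p : ℝ × ℝ =>
      ((fderiv ℝ ψ p (1, 0)) ^ 2 + (fderiv ℝ ψ p (0, 1)) ^ 2) / 2 + g * p.2 - Q / 2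
        + Φ (ψ p) := by
    funext p
    simp only [Rfun, hpxf p, hpyf p, hΦdef]
  have hΦC : ContDiff ℝ 1 Φ := by
    rw [contDiff_one_iff_deriv]
    refine ⟨hΦdiff, ?_⟩
    have : deriv Φ = γ := funext fun x => (hΦ x).deriv
    rw [this]; exact hγ.continuous
  have hRdiff : Differentiable ℝ (Rfun ψ γ g Q) := by
    rw [hReq]
    have d1 : ContDiff ℝ 1 (fun p : ℝ × ℝ =>
        ((fderiv ℝ ψ p (1, 0)) ^ 2 + (fderiv ℝ ψ p (0, 1)) ^ 2) / 2) :=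
      ((hPx.pow 2).add (hPy.pow 2)).div_const 2
    have d2 : ContDiff ℝ 1 (fun p : ℝ × ℝ => g * p.2) :=
      contDiff_const.mul contDiff_snd
    have d3 : ContDiff ℝ 1 (fun p : ℝ × ℝ => Φ (ψ p)) :=
      hΦC.comp (hψ.of_le one_le_two)
    exact (((d1.add d2).sub contDiff_const).add d3).differentiable one_ne_zero
  -- F and its regularity
  set F : ℝ → ℝ := fun x => (py ψ (x, η x)) ^ 2 / 2 with hFdef
  have hFeq : F = fun x => (fderiv ℝ ψ (x, η x) (0, 1)) ^ 2 / 2 := by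
    funext x; simp only [hFdef, hpyf (x, η x)]
  have hFC : ContDiff ℝ 1 F := by
    rw [hFeq]
    exact ((hPy.comp (contDiff_id.prodMk hη)).pow 2).div_const 2
  -- derivative of F is nonpositive on the interior
  have hkey : ∀ x ∈ interior (Set.Icc c d), deriv F x ≤ 0 := by
    rw [interior_Icc]
    intro x hx
    have hxc : c ≤ x := le_of_lt hx.1
    have hxd : x ≤ d := le_of_lt hx.2
    rw [hident x]
    -- px R = deriv of the slice
    set f : ℝ → ℝ := fun t => Rfun ψ γ g Q (t, η x) with hfdef
    have hpxR : px (Rfun ψ γ g Q) (x, η x) = deriv f x := rfl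
    rw [hpxR]
    have hdf : HasDerivAt f (deriv f x) x := by
      have h1 : DifferentiableAt ℝ (fun t : ℝ => ((t, η x) : ℝ × ℝ)) x :=
        differentiableAt_id.prodMk (differentiableAt_const _)
      have h2 := (hRdiff (x, η x)).comp x h1
      exact h2.hasDerivAt
    -- x is a local max of f on Icc x d
    have hmax : IsLocalMaxOn f (Set.Icc x d) x := by
      apply Filter.eventually_inf_principal.2
      filter_upwards with t ht
      have htc : t ∈ Set.Icc c d := ⟨le_trans hxc ht.1, ht.2⟩
      have hle : η x ≤ η t := hmono.monotoneOn ⟨hxc, hxd⟩ htc ht.1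
      have := hRle (t, η x) (le_of_lt (hηpos x)) hle
      simpa [hfdef, hRsurf x] using this
    have hcone : (1 : ℝ) ∈ posTangentConeAt (Set.Icc x d) x := by
      apply mem_posTangentConeAt_of_frequently_mem
      apply Filter.Eventually.frequently
      filter_upwards [Ioo_mem_nhdsGT_of_mem (Set.mem_Ico.2 ⟨le_refl (0:ℝ), sub_pos.2 hx.2⟩)]
        with t ht
      have ht1 := ht.1; have ht2 := ht.2
      constructor <;> simp only [smul_eq_mul, mul_one] <;> linarith
    have := hmax.hasFDerivWithinAt_nonpos hdf.hasDerivWithinAt.hasFDerivWithinAt hcone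
    simpa using this
  -- F is antitone on Icc c d
  have hFanti : AntitoneOn F (Set.Icc c d) :=
    antitoneOn_of_deriv_nonpos (convex_Icc c d) hFC.continuous.continuousOn
      (hFC.differentiable one_ne_zero).differentiableOn hkey
  -- conclude for |py|
  intro a ha b hb hab
  have h := hFanti ha hb hab
  have h2 : (py ψ (b, η b)) ^ 2 ≤ (py ψ (a, η a)) ^ 2 := by
    simp only [hFdef] at h; linarith
  calc |py ψ (b, η b)| = Real.sqrt ((py ψ (b, η b)) ^ 2) := (Real.sqrt_sq_eq_abs _).symm
    _ ≤ Real.sqrt ((py ψ (a, η a)) ^ 2) := Real.sqrt_le_sqrt h2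
    _ = |py ψ (a, η a)| := Real.sqrt_sq_eq_abs _
end
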